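/- Let A be an abelian group of finite Prüfer rank (every finitely generated subgroup of A can be generated by at most r elements, for some fixed r), let T be the torsion subgroup of A, and let φ : A → A be an automorphism whose Reidemeister number is finite, i.e., the quotient of A by the image of the endomorphism a ↦ a - φ(a) is finite. Then every fixed point of φ is a torsion element; that is, C(φ) ⊆ T, and hence C(φ) = C(φ|_T), the fixed-point subgroup of the restriction of φ to T. -/

import Mathlib

/-- For an automorphism `φ` of an abelian group of finite Prüfer rank with finite
Reidemeister number (finite cokernel of `1 - φ`), every fixed point of `φ` is torsion;
hence the fixed-point subgroup of `φ` coincides with the fixed-point subgroup of the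
restriction of `φ` to the torsion subgroup `T`. -/
theorem fixedPoints_subset_torsion
    {A : Type*} [AddCommGroup A] (r : ℕ)
    (hrk : ∀ H : AddSubgroup A, H.FG →
      ∃ S : Finset A, S.card ≤ r ∧ AddSubgroup.closure ↑S = H)
    (φ : A ≃+ A)
    (hR : Finite (A ⧸ (AddMonoidHom.id A - φ.toAddMonoidHom).range)) :
    (∀ a : A, φ a = a → a ∈ AddCommGroup.torsion A) ∧
    {a : A | φ a = a}
      = Subtype.val '' {t : AddCommGroup.torsion A | φ (t : A) = (t : A)} := by
  set ψ : A →+ A := AddMonoidHom.id A - φ.toAddMonoidHom with hψdef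
  have key : ∀ a : A, φ a = a → a ∈ AddCommGroup.torsion A := by
    intro a ha
    rw [AddCommGroup.mem_torsion]
    by_contra hfin
    -- the exponent trick : n • x ∈ range ψ for all x
    set n : ℕ := Nat.card (A ⧸ ψ.range) with hn
    have hnpos : 0 < n := Nat.card_pos
    have hmem : ∀ x : A, ∃ z : A, ψ z = n • x := by
      intro x
      have h0 : (n • (QuotientAddGroup.mk x : A ⧸ ψ.range)) = 0 := card_nsmul_eq_zero'
      rw [← QuotientAddGroup.mk_nsmul, QuotientAddGroup.eq_zero_iff] at h0
      obtain ⟨z, hz⟩ := h0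
      exact ⟨z, hz⟩
    choose sec hsec using hmem
    -- the recursive sequence
    set y : ℕ → A := fun k => Nat.rec a (fun _ prev => sec prev) k with hydef
    have hy0 : y 0 = a := rfl
    have hys : ∀ k, ψ (y (k + 1)) = n • y k := fun k => hsec (y k)
    have hψa : ψ a = 0 := by simp [hψdef, ha]
    set Ψ : AddMonoid.End A := ψ with hΨdef
    -- iterates
    have key1 : ∀ j k : ℕ, (Ψ ^ j) (y (k + j)) = n ^ j • y k := by
      intro j
      induction j with
      | zero => intro k; simp
      | succ j ih =>
        intro k
        have : (Ψ ^ (j + 1)) (y (k + (j + 1))) = (Ψ ^ j) (Ψ (y (k + j + 1))) := by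
          rw [pow_succ]
          rfl
        rw [this, show Ψ (y (k + j + 1)) = n • y (k + j) from hys (k + j),
          map_nsmul, ih k, pow_succ, mul_comm (n ^ j) n, mul_smul]
    have key2 : ∀ k : ℕ, (Ψ ^ (k + 1)) (y k) = 0 := by
      intro k
      have h1 : (Ψ ^ (k + 1)) (y k) = Ψ ((Ψ ^ k) (y k)) := by
        rw [pow_succ']
        rfl
      have h2 : (Ψ ^ k) (y k) = n ^ k • a := by
        have := key1 k 0
        simpa [hy0] using this
      rw [h1, h2, map_nsmul, show Ψ a = 0 from hψa, smul_zero]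
    have key3 : ∀ j k : ℕ, k < j → (Ψ ^ j) (y k) = 0 := by
      intro j k hkj
      obtain ⟨m, hm⟩ : ∃ m, j = m + (k + 1) := ⟨j - (k + 1), by omega⟩
      subst hm
      have : (Ψ ^ (m + (k + 1))) (y k) = (Ψ ^ m) ((Ψ ^ (k + 1)) (y k)) := by
        rw [pow_add]
        rfl
      rw [this, key2 k, map_zero]
    -- linear independence of y 0, ..., y r
    have hli : LinearIndependent ℤ (fun i : Fin (r + 1) => y i) := by
      rw [Fintype.linearIndependent_iff]
      intro g hg
      by_contra hne
      push_neg at hne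
      obtain ⟨i0, hi0⟩ := hne
      classical
      set T : Finset (Fin (r + 1)) := Finset.univ.filter (fun i => g i ≠ 0) with hT
      have hTne : T.Nonempty := ⟨i0, by simp [hT, hi0]⟩
      set k : Fin (r + 1) := T.max' hTne with hk
      have hgk : g k ≠ 0 := by
        have := T.max'_mem hTne
        simp [hT] at this
        exact this
      have happ : (Ψ ^ (k : ℕ)) (∑ i : Fin (r + 1), g i • y i) = 0 := by
        rw [hg, map_zero]
      rw [map_sum] at happ
      have hsingle : ∀ i : Fin (r + 1), i ≠ k → (Ψ ^ (k : ℕ)) (g i • y i) = 0 := by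
        intro i hik
        rcases lt_or_gt_of_ne hik with h | h
        · rw [map_zsmul, key3 k i (by exact_mod_cast h), smul_zero]
        · have : g i = 0 := by
            by_contra hgi
            have hiT : i ∈ T := by simp [hT, hgi]
            exact absurd (T.le_max' i hiT) (not_le.mpr h)
          rw [this, zero_smul, map_zero]
      rw [Finset.sum_eq_single k (fun i _ hik => hsingle i hik)
        (fun h => absurd (Finset.mem_univ k) h)] at happ
      rw [map_zsmul] at happ
      have hΨk : (Ψ ^ (k : ℕ)) (y k) = n ^ (k : ℕ) • a := by
        have := key1 (k : ℕ) 0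
        simpa [hy0] using this
      rw [hΨk] at happ
      -- now (g k * n ^ k) • a = 0 with coefficient nonzero
      have hcast : ((n : ℤ) ^ (k : ℕ)) • a = n ^ (k : ℕ) • a := by
        rw [← Nat.cast_pow, natCast_zsmul]
      have hcoef : (g k * (n : ℤ) ^ (k : ℕ)) • a = 0 := by
        rw [mul_smul, hcast]
        exact happ
      have hc0 : g k * (n : ℤ) ^ (k : ℕ) ≠ 0 := by
        apply mul_ne_zero hgk
        positivity
      apply hfin
      rw [isOfFinAddOrder_iff_nsmul_eq_zero]
      refine ⟨(g k * (n : ℤ) ^ (k : ℕ)).natAbs, Int.natAbs_pos.mpr hc0, ?_⟩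
      have := hcoef
      rcases Int.natAbs_eq (g k * (n : ℤ) ^ (k : ℕ)) with h | h
      · rw [← natCast_zsmul, ← h, hcoef]
      · rw [← natCast_zsmul, ← neg_neg ((((g k * (n : ℤ) ^ (k : ℕ)).natAbs : ℤ))), ← h,
          neg_zsmul, hcoef, neg_zero]
    -- contradiction with rank
    have hHfg : (AddSubgroup.closure (Set.range (fun i : Fin (r + 1) => y i))).FG := by
      rw [AddSubgroup.fg_iff]
      exact ⟨_, rfl, Set.finite_range _⟩
    obtain ⟨S, hScard, hScl⟩ := hrk _ hHfg
    have hymem : ∀ i : Fin (r + 1), y i ∈ Submodule.span ℤ (S : Set A) := by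
      intro i
      have h1 : y i ∈ AddSubgroup.closure (S : Set A) := by
        rw [hScl]
        exact AddSubgroup.subset_closure ⟨i, rfl⟩
      have h2 : AddSubgroup.closure (S : Set A) ≤ (Submodule.span ℤ (S : Set A)).toAddSubgroup :=
        AddSubgroup.closure_le _ |>.mpr (Submodule.subset_span)
      exact h2 h1
    set v : Fin (r + 1) → Submodule.span ℤ (S : Set A) := fun i => ⟨y i, hymem i⟩ with hv
    have hliv : LinearIndependent ℤ v := by
      apply LinearIndependent.of_comp (Submodule.span ℤ (S : Set A)).subtype
      exact hli
    have hcard := hliv.cardinal_lift_le_rank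
    have hrank : Module.rank ℤ (Submodule.span ℤ (S : Set A)) ≤ (S.card : Cardinal) :=
      rank_span_finset_le S
    have h2 := hcard.trans (Cardinal.lift_le.mpr (hrank.trans
      (show ((S.card : ℕ) : Cardinal) ≤ ((r : ℕ) : Cardinal) by exact_mod_cast hScard)))
    have : r + 1 ≤ r := by
      have h3 := h2
      simp only [Cardinal.mk_fin, Cardinal.lift_natCast] at h3
      exact_mod_cast h3
    omega
  refine ⟨key, ?_⟩
  ext a
  constructor
  · intro ha
    exact ⟨⟨a, key a ha⟩, ha, rfl⟩
  · rintro ⟨t, ht, rfl⟩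
    exact ht
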